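/- Let n ≥ 2 and let M be a symmetric linear endomorphism of the Euclidean space ℝⁿ with eigenvalues λ_1 < ⋯ < λ_n and orthonormal eigenvectors e_1, …, e_n. If c > λ_2, then the sublevel set {x : ‖x‖ = 1 ∧ ⟪x, M x⟫ ≤ c} is path-connected (and nonempty). -/
import Mathlib

open RealInnerProductSpace

lemma aux_joined {X : Type*} [TopologicalSpace X] {S : Set X} {f : ℝ → X}
    (hf : Continuous f) (h : ∀ t ∈ Set.Icc (0:ℝ) 1, f t ∈ S) :
    JoinedIn S (f 0) (f 1) := by
  refine ⟨{ toFun := fun t => f t,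
            continuous_toFun := hf.comp continuous_subtype_val,
            source' := by simp,
            target' := by simp }, fun t => h t t.2⟩

set_option maxHeartbeats 1000000 in
/-- If `c > λ_2` (1-indexed; 0-indexed `c > lam 1`), the sublevel set
`{x : ‖x‖ = 1 ∧ ⟪x, M x⟫ ≤ c}` is path-connected (and in particular nonempty). -/
theorem sublevel_path_connected (n : ℕ) (hn : 2 ≤ n)
    (M : EuclideanSpace ℝ (Fin n) →ₗ[ℝ] EuclideanSpace ℝ (Fin n))
    (hM : ∀ x y : EuclideanSpace ℝ (Fin n), ⟪M x, y⟫ = ⟪x, M y⟫)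
    (lam : Fin n → ℝ) (hlam : StrictMono lam)
    (e : Fin n → EuclideanSpace ℝ (Fin n)) (he : Orthonormal ℝ e)
    (heig : ∀ i, M (e i) = lam i • e i)
    (c : ℝ) (hc : lam ⟨1, by omega⟩ < c) :
    IsPathConnected {x : EuclideanSpace ℝ (Fin n) | ‖x‖ = 1 ∧ ⟪x, M x⟫ ≤ c} := by
  set i0 : Fin n := ⟨0, by omega⟩ with hi0
  set i1 : Fin n := ⟨1, by omega⟩ with hi1
  have hne : i0 ≠ i1 := by simp [hi0, hi1, Fin.ext_iff]
  have hinner : ∀ i j, ⟪e i, e j⟫ = if i = j then (1:ℝ) else 0 :=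
    orthonormal_iff_ite.mp he
  have h01 : lam i0 < lam i1 := hlam (by simp [hi0, hi1, Fin.lt_def])
  -- quadratic expansion
  have hquad : ∀ (x u : EuclideanSpace ℝ (Fin n)) (s t : ℝ),
      ⟪s•x + t•u, M (s•x + t•u)⟫
        = s^2*⟪x, M x⟫ + 2*s*t*⟪x, M u⟫ + t^2*⟪u, M u⟫ := by
    intro x u s t
    have hcross : ⟪u, M x⟫ = ⟪x, M u⟫ := by rw [← hM, real_inner_comm]
    simp only [map_add, map_smul, inner_add_left, inner_add_right,
      real_inner_smul_left, real_inner_smul_right, hcross]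
    ring
  -- norm
  have hnorm : ∀ (x u : EuclideanSpace ℝ (Fin n)) (s t : ℝ), ‖x‖ = 1 → ‖u‖ = 1 →
      ⟪x, u⟫ = 0 → s^2 + t^2 = 1 → ‖s•x + t•u‖ = 1 := by
    intro x u s t hx hu hxu hst
    have h2 : ‖s•x + t•u‖^2 = 1 := by
      rw [norm_add_sq_real, norm_smul, norm_smul, real_inner_smul_left,
        real_inner_smul_right, hxu, hx, hu]
      simp only [mul_one, mul_zero, Real.norm_eq_abs, sq_abs]
      linarith
    have h3 : (‖s•x + t•u‖ - 1) * (‖s•x + t•u‖ + 1) = 0 := by nlinarith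
    rcases mul_eq_zero.mp h3 with h | h
    · linarith
    · have := norm_nonneg (s•x + t•u); linarith
  -- value of f on the span of e0, e1
  have hfe : ∀ a b : ℝ, ⟪a•e i0 + b•e i1, M (a•e i0 + b•e i1)⟫
      = a^2 * lam i0 + b^2 * lam i1 := by
    intro a b
    rw [hquad]
    simp only [heig, real_inner_smul_right, hinner, hne, eq_self_iff_true, if_true, if_false]
    ring
  have hnormV : ∀ a b : ℝ, a^2 + b^2 = 1 → ‖a•e i0 + b•e i1‖ = 1 := fun a b hab =>
    hnorm _ _ a b (he.1 i0) (he.1 i1) (by rw [hinner]; exact if_neg hne) hab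
  have hfeV : ∀ a b : ℝ, a^2 + b^2 = 1 → ⟪a•e i0 + b•e i1, M (a•e i0 + b•e i1)⟫ ≤ c := by
    intro a b hab
    rw [hfe]
    have h1 : a^2*lam i0 ≤ a^2*lam i1 := mul_le_mul_of_nonneg_left h01.le (sq_nonneg a)
    have h2 : a^2*lam i1 + b^2*lam i1 = lam i1 := by linear_combination lam i1 * hab
    linarith
  set S := {x : EuclideanSpace ℝ (Fin n) | ‖x‖ = 1 ∧ ⟪x, M x⟫ ≤ c} with hS
  have hVmem : ∀ a b : ℝ, a^2 + b^2 = 1 → a•e i0 + b•e i1 ∈ S := fun a b hab =>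
    ⟨hnormV a b hab, hfeV a b hab⟩
  -- any unit vector in span(e0,e1) is joined to e0 within S
  have hVjoin : ∀ a b : ℝ, a^2 + b^2 = 1 → JoinedIn S (a•e i0 + b•e i1) (e i0) := by
    intro a b hab
    obtain ⟨θ, hθc, hθs⟩ : ∃ θ : ℝ, Real.cos θ = a ∧ Real.sin θ = b := by
      have ha1 : -1 ≤ a := by nlinarith
      have ha2 : a ≤ 1 := by nlinarith
      have hb2 : Real.sqrt (1 - a^2) = |b| := by
        rw [show 1 - a^2 = b^2 by linarith, Real.sqrt_sq_eq_abs]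
      rcases le_or_gt 0 b with hb | hb
      · exact ⟨Real.arccos a, Real.cos_arccos ha1 ha2, by
          rw [Real.sin_arccos, hb2, abs_of_nonneg hb]⟩
      · exact ⟨-Real.arccos a, by rw [Real.cos_neg, Real.cos_arccos ha1 ha2], by
          rw [Real.sin_neg, Real.sin_arccos, hb2, abs_of_neg hb, neg_neg]⟩
    have hcont : Continuous fun t : ℝ =>
        Real.cos ((1-t)*θ) • e i0 + Real.sin ((1-t)*θ) • e i1 := by
      fun_prop
    have hmem : ∀ t ∈ Set.Icc (0:ℝ) 1,
        Real.cos ((1-t)*θ) • e i0 + Real.sin ((1-t)*θ) • e i1 ∈ S := by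
      intro t _
      exact hVmem _ _ (Real.cos_sq_add_sin_sq ((1-t)*θ))
    have := aux_joined hcont hmem
    simpa [hθc, hθs] using this
  refine ⟨e i0, ?_, ?_⟩
  · have := hVmem 1 0 (by norm_num)
    simpa using this
  · rintro y ⟨hy1, hy2⟩
    -- find u = a e0 + b e1 unit, orthogonal to y, with ⟪y, M u⟫ ≤ 0
    obtain ⟨a, b, hab, hperp, hd⟩ : ∃ a b : ℝ, a^2 + b^2 = 1 ∧
        ⟪y, a•e i0 + b•e i1⟫ = 0 ∧ ⟪y, M (a•e i0 + b•e i1)⟫ ≤ 0 := by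
      obtain ⟨a, b, hab, hperp⟩ : ∃ a b : ℝ, a^2 + b^2 = 1 ∧
          ⟪y, a•e i0 + b•e i1⟫ = 0 := by
        set p := ⟪y, e i0⟫ with hp
        set q := ⟪y, e i1⟫ with hq
        by_cases h : p = 0 ∧ q = 0
        · exact ⟨1, 0, by norm_num, by
            simp [inner_add_right, real_inner_smul_right, ← hp, ← hq, h.1]⟩
        · have hpos : 0 < p^2 + q^2 := by
            rcases not_and_or.mp h with h' | h'
            · nlinarith [sq_nonneg q, sq_pos_of_ne_zero h']
            · nlinarith [sq_nonneg p, sq_pos_of_ne_zero h']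
          set r := Real.sqrt (p^2 + q^2) with hr
          have hrpos : 0 < r := Real.sqrt_pos.mpr hpos
          have hr2 : r^2 = p^2 + q^2 := Real.sq_sqrt hpos.le
          have hr0 : r ≠ 0 := hrpos.ne'
          refine ⟨q/r, -p/r, ?_, ?_⟩
          · have h2 : (q/r)^2 + (-p/r)^2 = (p^2+q^2)/r^2 := by ring
            rw [h2, ← hr2, div_self (pow_ne_zero 2 hr0)]
          · simp only [inner_add_right, real_inner_smul_right]
            ring
      rcases le_or_gt (⟪y, M (a•e i0 + b•e i1)⟫) 0 with h | h
      · exact ⟨a, b, hab, hperp, h⟩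
      · refine ⟨-a, -b, by nlinarith, ?_, ?_⟩
        · have hneg : (-a)•e i0 + (-b)•e i1 = -(a•e i0 + b•e i1) := by
            rw [neg_smul, neg_smul, neg_add]
          rw [hneg, inner_neg_right, hperp, neg_zero]
        · have hneg : (-a)•e i0 + (-b)•e i1 = -(a•e i0 + b•e i1) := by
            rw [neg_smul, neg_smul, neg_add]
          rw [hneg, map_neg, inner_neg_right]
          linarith
    set u := a•e i0 + b•e i1 with hu
    have hun : ‖u‖ = 1 := hnormV a b hab
    have hfu : ⟪u, M u⟫ ≤ c := hfeV a b hab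
    -- quarter great circle from y to u
    have hcont : Continuous fun t : ℝ =>
        Real.cos (Real.pi/2*t) • y + Real.sin (Real.pi/2*t) • u := by fun_prop
    have hmem : ∀ t ∈ Set.Icc (0:ℝ) 1,
        Real.cos (Real.pi/2*t) • y + Real.sin (Real.pi/2*t) • u ∈ S := by
      rintro t ⟨ht0, ht1⟩
      have hpi : 0 < Real.pi := Real.pi_pos
      have hθ0 : 0 ≤ Real.pi/2*t := by positivity
      have hθ1 : Real.pi/2*t ≤ Real.pi/2 := by nlinarith
      have hcos : 0 ≤ Real.cos (Real.pi/2*t) :=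
        Real.cos_nonneg_of_mem_Icc ⟨by linarith, hθ1⟩
      have hsin : 0 ≤ Real.sin (Real.pi/2*t) :=
        Real.sin_nonneg_of_nonneg_of_le_pi hθ0 (by linarith)
      constructor
      · exact hnorm y u _ _ hy1 hun hperp
          (Real.cos_sq_add_sin_sq (Real.pi/2*t))
      · rw [hquad]
        have hpyth := Real.sin_sq_add_cos_sq (Real.pi/2*t)
        have hA : Real.cos (Real.pi/2*t)^2 * ⟪y, M y⟫ ≤ Real.cos (Real.pi/2*t)^2 * c :=
          mul_le_mul_of_nonneg_left hy2 (sq_nonneg _)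
        have hB : Real.sin (Real.pi/2*t)^2 * ⟪u, M u⟫ ≤ Real.sin (Real.pi/2*t)^2 * c :=
          mul_le_mul_of_nonneg_left hfu (sq_nonneg _)
        have hC : 2 * Real.cos (Real.pi/2*t) * Real.sin (Real.pi/2*t) * ⟪y, M u⟫ ≤ 0 :=
          mul_nonpos_of_nonneg_of_nonpos (by positivity) hd
        have hD : Real.cos (Real.pi/2*t)^2 * c + Real.sin (Real.pi/2*t)^2 * c = c := by
          linear_combination c * hpyth
        linarith
    have hjy : JoinedIn S y u := by
      have := aux_joined hcont hmem
      simpa using this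
    exact (hjy.trans (hVjoin a b hab)).symm
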